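/- Let d ≥ 6 be an even integer and let g(x,y) = (x² − y²)²·(x^{d−4} + y^{d−4}) on ℝ². Then g is a homogeneous polynomial of degree d with |G₁(g)| < +∞, but G₁(g) = {(x,y) : g(x,y) ≤ 1} is unbounded, since it contains the lines y = x and y = −x. Moreover, for every t < 1 the polynomial g(x,y) − (1−t)x^d takes negative values (for x = y), hence has |G₁(·)| = +∞; consequently the set 𝔽_d(ℝ²) of homogeneous degree-d polynomials on ℝ² with finite sublevel-set volume is not open. -/

import Mathlib

open MeasureTheory
open Set

noncomputable section

/-- `G₁(g) = {x ∈ ℝⁿ : g(x) ≤ 1}`, the sublevel set of a polynomial at level 1. -/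
def G1 {n : ℕ} (g : MvPolynomial (Fin n) ℝ) : Set (Fin n → ℝ) :=
  {x | MvPolynomial.eval x g ≤ 1}

/-- The polynomial `g(x,y) = (x² - y²)²(x^{d-4} + y^{d-4})` on `ℝ²`. -/
def g9 (d : ℕ) : MvPolynomial (Fin 2) ℝ :=
  (MvPolynomial.X 0 ^ 2 - MvPolynomial.X 1 ^ 2) ^ 2 *
    (MvPolynomial.X 0 ^ (d - 4) + MvPolynomial.X 1 ^ (d - 4))

namespace Stmt9Aux

lemma I1fin : ∫⁻ x : ℝ in Ici 1, ENNReal.ofReal (4 / x ^ 2) < ⊤ := by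
  have h0 : IntegrableOn (fun t : ℝ => t ^ (-2 : ℝ)) (Ioi 1) :=
    integrableOn_Ioi_rpow_of_lt (by norm_num) one_pos
  have h : IntegrableOn (fun x : ℝ => 4 / x ^ 2) (Ici 1) := by
    rw [integrableOn_Ici_iff_integrableOn_Ioi]
    refine IntegrableOn.congr_fun (h0.const_mul 4) (fun x hx => ?_) measurableSet_Ioi
    have hx0 : (0:ℝ) < x := lt_trans one_pos hx
    rw [Real.rpow_neg hx0.le, ← Real.rpow_natCast x 2]
    norm_num [div_eq_mul_inv]
  simpa using h.lintegral_lt_top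

lemma I2fin : ∫⁻ x : ℝ in Iic (-1 : ℝ), ENNReal.ofReal (4 / x ^ 2) < ⊤ := by
  have key := (Measure.measurePreserving_neg (volume : Measure ℝ)).setLIntegral_comp_preimage_emb
    (MeasurableEquiv.neg ℝ).measurableEmbedding (fun x => ENNReal.ofReal (4 / x ^ 2)) (Ici 1)
  have hpre : (Neg.neg : ℝ → ℝ) ⁻¹' (Ici 1) = Iic (-1 : ℝ) := by
    ext x
    simp only [mem_preimage, mem_Ici, mem_Iic, le_neg]
  rw [hpre] at key
  simp only [neg_sq] at key
  rw [key]
  exact I1fin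

lemma volSA : (volume : Measure (ℝ × ℝ))
    {p : ℝ × ℝ | 1 ≤ |p.1| ∧ ((p.2 - p.1) ^ 2 * p.1 ^ 4 ≤ 1 ∨ (p.2 + p.1) ^ 2 * p.1 ^ 4 ≤ 1)} < ⊤ := by
  set A : Set (ℝ × ℝ) :=
    {p : ℝ × ℝ | 1 ≤ |p.1| ∧ ((p.2 - p.1) ^ 2 * p.1 ^ 4 ≤ 1 ∨ (p.2 + p.1) ^ 2 * p.1 ^ 4 ≤ 1)} with hAdef
  have hA : MeasurableSet A := by
    apply IsClosed.measurableSet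
    have h1 : IsClosed {p : ℝ × ℝ | 1 ≤ |p.1|} :=
      isClosed_le continuous_const (continuous_abs.comp continuous_fst)
    have h2 : IsClosed {p : ℝ × ℝ | (p.2 - p.1) ^ 2 * p.1 ^ 4 ≤ 1} :=
      isClosed_le (by fun_prop) continuous_const
    have h3 : IsClosed {p : ℝ × ℝ | (p.2 + p.1) ^ 2 * p.1 ^ 4 ≤ 1} :=
      isClosed_le (by fun_prop) continuous_const
    exact h1.inter (h2.union h3)
  have hvol : (volume : Measure (ℝ × ℝ)) = (volume : Measure ℝ).prod volume := rfl
  rw [hvol, Measure.prod_apply hA]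
  have hb : ∀ x : ℝ, volume (Prod.mk x ⁻¹' A) ≤
      Set.indicator (Ici 1 ∪ Iic (-1)) (fun x => ENNReal.ofReal (4 / x ^ 2)) x := by
    intro x
    by_cases hx : 1 ≤ |x|
    · have hx2 : (0:ℝ) < x ^ 2 := by
        have : x ≠ 0 := by intro h; rw [h] at hx; simp at hx; linarith
        positivity
      have key : ∀ a y : ℝ, (y - a) ^ 2 * x ^ 4 ≤ 1 → y ∈ Icc (a - 1 / x ^ 2) (a + 1 / x ^ 2) := by
        intro a y hy
        have h1 : |y - a| ≤ 1 / x ^ 2 := by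
          apply abs_le_of_sq_le_sq _ (by positivity)
          rw [div_pow, one_pow, le_div_iff₀ (by positivity)]
          calc (y - a) ^ 2 * (x ^ 2) ^ 2 = (y - a) ^ 2 * x ^ 4 := by ring
            _ ≤ 1 := hy
        rw [abs_le] at h1
        constructor <;> [linarith [h1.1]; linarith [h1.2]]
      have hsub : Prod.mk x ⁻¹' A ⊆
          Icc (x - 1 / x ^ 2) (x + 1 / x ^ 2) ∪ Icc (-x - 1 / x ^ 2) (-x + 1 / x ^ 2) := by
        rintro y ⟨-, hy | hy⟩
        · exact Or.inl (key x y hy)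
        · refine Or.inr (key (-x) y ?_)
          calc (y - -x) ^ 2 * x ^ 4 = (y + x) ^ 2 * x ^ 4 := by ring
            _ ≤ 1 := hy
      calc volume (Prod.mk x ⁻¹' A)
          ≤ volume (Icc (x - 1 / x ^ 2) (x + 1 / x ^ 2))
            + volume (Icc (-x - 1 / x ^ 2) (-x + 1 / x ^ 2)) :=
          (measure_mono hsub).trans (measure_union_le _ _)
        _ = ENNReal.ofReal (2 / x ^ 2) + ENNReal.ofReal (2 / x ^ 2) := by
          rw [Real.volume_Icc, Real.volume_Icc]
          congr 2 <;> ring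
        _ = ENNReal.ofReal (4 / x ^ 2) := by
          rw [← ENNReal.ofReal_add (by positivity) (by positivity)]
          congr 1; ring
        _ = Set.indicator (Ici 1 ∪ Iic (-1)) (fun x => ENNReal.ofReal (4 / x ^ 2)) x := by
          rw [Set.indicator_of_mem]
          rcases le_abs.mp hx with h | h
          · exact Or.inl h
          · exact Or.inr (by simpa [mem_Iic] using (by linarith : x ≤ -1))
    · have hempty : Prod.mk x ⁻¹' A = ∅ := by
        ext y; simp only [mem_preimage, mem_empty_iff_false, iff_false]
        rintro ⟨h1, -⟩; exact hx h1
      rw [hempty]; simp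
  calc (∫⁻ x, volume (Prod.mk x ⁻¹' A)) ≤
      ∫⁻ x, Set.indicator (Ici 1 ∪ Iic (-1)) (fun x => ENNReal.ofReal (4 / x ^ 2)) x :=
        lintegral_mono hb
    _ = ∫⁻ x in Ici 1 ∪ Iic (-1), ENNReal.ofReal (4 / x ^ 2) :=
        lintegral_indicator (measurableSet_Ici.union measurableSet_Iic) _
    _ = (∫⁻ x in Ici 1, ENNReal.ofReal (4 / x ^ 2))
        + ∫⁻ x in Iic (-1 : ℝ), ENNReal.ofReal (4 / x ^ 2) := by
        apply lintegral_union measurableSet_Iic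
        rw [Set.disjoint_left]
        intro x h1 h2
        simp only [mem_Ici] at h1
        simp only [mem_Iic] at h2
        linarith
    _ < ⊤ := ENNReal.add_lt_top.mpr ⟨I1fin, I2fin⟩

lemma aux_strip {m : ℕ} (hm : 2 ≤ m) (hme : Even m) {x y : ℝ} (hx : 1 ≤ |x|)
    (h : (x ^ 2 - y ^ 2) ^ 2 * (x ^ m + y ^ m) ≤ 1) :
    (y - x) ^ 2 * x ^ 4 ≤ 1 ∨ (y + x) ^ 2 * x ^ 4 ≤ 1 := by
  have hym : (0:ℝ) ≤ y ^ m := hme.pow_nonneg y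
  have hxm : x ^ 2 ≤ x ^ m := by
    calc x ^ 2 = |x| ^ 2 := (sq_abs x).symm
      _ ≤ |x| ^ m := pow_le_pow_right₀ hx hm
      _ = x ^ m := hme.pow_abs x
  have key : (x ^ 2 - y ^ 2) ^ 2 * x ^ 2 ≤ 1 := by
    nlinarith [sq_nonneg (x ^ 2 - y ^ 2), hym, hxm, h]
  rcases le_total ((y - x) ^ 2) ((y + x) ^ 2) with hc | hc
  · left
    have h1 : x ^ 2 ≤ (y + x) ^ 2 := by nlinarith [hc]
    calc (y - x) ^ 2 * x ^ 4 = ((y - x) ^ 2 * x ^ 2) * x ^ 2 := by ring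
      _ ≤ ((y - x) ^ 2 * (y + x) ^ 2) * x ^ 2 :=
        mul_le_mul_of_nonneg_right (mul_le_mul_of_nonneg_left h1 (sq_nonneg _)) (sq_nonneg x)
      _ = (x ^ 2 - y ^ 2) ^ 2 * x ^ 2 := by ring
      _ ≤ 1 := key
  · right
    have h1 : x ^ 2 ≤ (y - x) ^ 2 := by nlinarith [hc]
    calc (y + x) ^ 2 * x ^ 4 = ((y + x) ^ 2 * x ^ 2) * x ^ 2 := by ring
      _ ≤ ((y + x) ^ 2 * (y - x) ^ 2) * x ^ 2 :=
        mul_le_mul_of_nonneg_right (mul_le_mul_of_nonneg_left h1 (sq_nonneg _)) (sq_nonneg x)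
      _ = (x ^ 2 - y ^ 2) ^ 2 * x ^ 2 := by ring
      _ ≤ 1 := key

lemma volP {m : ℕ} (hm : 2 ≤ m) (hme : Even m) :
    (volume : Measure (ℝ × ℝ))
      {p : ℝ × ℝ | (p.1 ^ 2 - p.2 ^ 2) ^ 2 * (p.1 ^ m + p.2 ^ m) ≤ 1} < ⊤ := by
  set A : Set (ℝ × ℝ) :=
    {p : ℝ × ℝ | 1 ≤ |p.1| ∧ ((p.2 - p.1) ^ 2 * p.1 ^ 4 ≤ 1 ∨ (p.2 + p.1) ^ 2 * p.1 ^ 4 ≤ 1)}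
    with hAdef
  have hA : MeasurableSet A := by
    apply IsClosed.measurableSet
    have h1 : IsClosed {p : ℝ × ℝ | 1 ≤ |p.1|} :=
      isClosed_le continuous_const (continuous_abs.comp continuous_fst)
    have h2 : IsClosed {p : ℝ × ℝ | (p.2 - p.1) ^ 2 * p.1 ^ 4 ≤ 1} :=
      isClosed_le (by fun_prop) continuous_const
    have h3 : IsClosed {p : ℝ × ℝ | (p.2 + p.1) ^ 2 * p.1 ^ 4 ≤ 1} :=
      isClosed_le (by fun_prop) continuous_const
    exact h1.inter (h2.union h3)
  have hsub : {p : ℝ × ℝ | (p.1 ^ 2 - p.2 ^ 2) ^ 2 * (p.1 ^ m + p.2 ^ m) ≤ 1} ⊆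
      (Icc (-1:ℝ) 1 ×ˢ Icc (-1:ℝ) 1) ∪ A ∪ (Prod.swap ⁻¹' A) := by
    rintro ⟨x, y⟩ h
    simp only [mem_setOf_eq] at h
    by_cases hx : 1 ≤ |x|
    · exact Or.inl (Or.inr ⟨hx, aux_strip hm hme hx h⟩)
    by_cases hy : 1 ≤ |y|
    · refine Or.inr ⟨hy, aux_strip hm hme hy ?_⟩
      calc (y ^ 2 - x ^ 2) ^ 2 * (y ^ m + x ^ m)
          = (x ^ 2 - y ^ 2) ^ 2 * (x ^ m + y ^ m) := by ring
        _ ≤ 1 := h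
    · push_neg at hx hy
      rw [abs_lt] at hx hy
      exact Or.inl (Or.inl ⟨⟨hx.1.le, hx.2.le⟩, ⟨hy.1.le, hy.2.le⟩⟩)
  have hswap : (volume : Measure (ℝ × ℝ)) (Prod.swap ⁻¹' A) = volume A := by
    have hp : MeasurePreserving (Prod.swap : ℝ × ℝ → ℝ × ℝ) volume volume :=
      Measure.measurePreserving_swap
    exact hp.measure_preimage hA.nullMeasurableSet
  calc (volume : Measure (ℝ × ℝ)) {p : ℝ × ℝ | (p.1 ^ 2 - p.2 ^ 2) ^ 2 * (p.1 ^ m + p.2 ^ m) ≤ 1}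
      ≤ volume ((Icc (-1:ℝ) 1 ×ˢ Icc (-1:ℝ) 1) ∪ A ∪ (Prod.swap ⁻¹' A)) := measure_mono hsub
    _ ≤ volume ((Icc (-1:ℝ) 1 ×ˢ Icc (-1:ℝ) 1) ∪ A) + volume (Prod.swap ⁻¹' A) :=
        measure_union_le _ _
    _ ≤ volume (Icc (-1:ℝ) 1 ×ˢ Icc (-1:ℝ) 1) + volume A + volume (Prod.swap ⁻¹' A) :=
        add_le_add (measure_union_le _ _) le_rfl
    _ < ⊤ := by
        rw [hswap]
        have hsq : (volume : Measure (ℝ × ℝ)) (Icc (-1:ℝ) 1 ×ˢ Icc (-1:ℝ) 1) < ⊤ := by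
          rw [show (volume : Measure (ℝ × ℝ)) = (volume : Measure ℝ).prod volume from rfl,
            Measure.prod_prod, Real.volume_Icc]
          norm_num
        have hAfin := volSA
        rw [← hAdef] at hAfin
        exact ENNReal.add_lt_top.mpr ⟨ENNReal.add_lt_top.mpr ⟨hsq, hAfin⟩, hAfin⟩

lemma isHom_X_pow (i : Fin 2) (k : ℕ) : (MvPolynomial.X (R := ℝ) i ^ k).IsHomogeneous k := by
  rw [MvPolynomial.X_pow_eq_monomial]
  exact MvPolynomial.isHomogeneous_monomial _
    (Finsupp.degree_single i k)

lemma volR (M : ℝ) :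
    (volume : Measure (ℝ × ℝ)) {p : ℝ × ℝ | M ≤ p.1 ∧ p.1 < p.2 ∧ p.2 < p.1 + 1} = ⊤ := by
  set R : Set (ℝ × ℝ) := {p : ℝ × ℝ | M ≤ p.1 ∧ p.1 < p.2 ∧ p.2 < p.1 + 1} with hRdef
  have hR : MeasurableSet R := by
    refine MeasurableSet.inter ?_ (MeasurableSet.inter ?_ ?_)
    · exact measurableSet_le measurable_const measurable_fst
    · exact measurableSet_lt measurable_fst measurable_snd
    · exact measurableSet_lt measurable_snd (measurable_fst.add_const 1)
  rw [show (volume : Measure (ℝ × ℝ)) = (volume : Measure ℝ).prod volume from rfl,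
    Measure.prod_apply hR]
  have hsl : ∀ x : ℝ, volume (Prod.mk x ⁻¹' R) =
      Set.indicator (Ici M) (fun _ => (1 : ENNReal)) x := by
    intro x
    by_cases hx : M ≤ x
    · rw [Set.indicator_of_mem (mem_Ici.mpr hx)]
      have : Prod.mk x ⁻¹' R = Ioo x (x + 1) := by
        ext y; simp [hRdef, hx]
      rw [this, Real.volume_Ioo]
      norm_num
    · rw [Set.indicator_of_notMem (by simpa using hx)]
      have : Prod.mk x ⁻¹' R = ∅ := by
        ext y; simp [hRdef, hx]
      rw [this]; simp
  rw [lintegral_congr hsl, lintegral_indicator measurableSet_Ici, setLIntegral_one,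
    Real.volume_Ici]

lemma eval_g9 (d : ℕ) (x : Fin 2 → ℝ) :
    MvPolynomial.eval x (g9 d) = ((x 0) ^ 2 - (x 1) ^ 2) ^ 2 * ((x 0) ^ (d - 4) + (x 1) ^ (d - 4)) := by
  simp [g9]

lemma finTwoArrow_apply' (x : Fin 2 → ℝ) :
    (MeasurableEquiv.finTwoArrow : (Fin 2 → ℝ) ≃ᵐ ℝ × ℝ) x = (x 0, x 1) := rfl

lemma est {m d : ℕ} (hmd : m + 4 = d) {c x y : ℝ} (hc : 0 < c)
    (hx : 1 + 9 * 2 ^ d / c ≤ x) (hxy : x < y) (hyx : y < x + 1) :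
    (x ^ 2 - y ^ 2) ^ 2 * (x ^ m + y ^ m) ≤ 1 + c * x ^ d := by
  have hx1 : (1:ℝ) ≤ x := le_trans (le_add_of_nonneg_right (by positivity)) hx
  have hy0 : (0:ℝ) ≤ y := by linarith
  have b1 : (y - x) ^ 2 ≤ 1 := by nlinarith
  have b2 : (y + x) ^ 2 ≤ 9 * x ^ 2 := by nlinarith
  have h1 : (x ^ 2 - y ^ 2) ^ 2 ≤ 9 * x ^ 2 := by
    calc (x ^ 2 - y ^ 2) ^ 2 = (y - x) ^ 2 * (y + x) ^ 2 := by ring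
      _ ≤ 1 * (9 * x ^ 2) := mul_le_mul b1 b2 (sq_nonneg _) zero_le_one
      _ = 9 * x ^ 2 := one_mul _
  have h2 : x ^ m + y ^ m ≤ 2 ^ d * x ^ m := by
    have hym : y ^ m ≤ 2 ^ m * x ^ m := by
      calc y ^ m ≤ (2 * x) ^ m := pow_le_pow_left₀ hy0 (by linarith) m
        _ = 2 ^ m * x ^ m := mul_pow 2 x m
    have hxm0 : (0:ℝ) ≤ x ^ m := by positivity
    have h2m : (1:ℝ) + 2 ^ m ≤ 2 ^ d := by
      have e1 : (1:ℝ) ≤ 2 ^ m := one_le_pow₀ one_le_two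
      have e2 : (2:ℝ) ^ (m + 1) ≤ 2 ^ d := pow_le_pow_right₀ one_le_two (by omega)
      rw [pow_succ] at e2
      linarith
    calc x ^ m + y ^ m ≤ x ^ m + 2 ^ m * x ^ m := by linarith
      _ = (1 + 2 ^ m) * x ^ m := by ring
      _ ≤ 2 ^ d * x ^ m := mul_le_mul_of_nonneg_right h2m hxm0
  have step : (x ^ 2 - y ^ 2) ^ 2 * (x ^ m + y ^ m) ≤ 9 * 2 ^ d * (x ^ 2 * x ^ m) := by
    calc (x ^ 2 - y ^ 2) ^ 2 * (x ^ m + y ^ m) ≤ (9 * x ^ 2) * (2 ^ d * x ^ m) :=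
        mul_le_mul h1 h2 (by positivity) (by positivity)
      _ = 9 * 2 ^ d * (x ^ 2 * x ^ m) := by ring
  have hcx : 9 * 2 ^ d ≤ c * x ^ 2 := by
    have h3 : 9 * 2 ^ d / c ≤ x := by linarith
    have h4 : (9:ℝ) * 2 ^ d ≤ c * x := by
      rw [div_le_iff₀ hc] at h3
      linarith [mul_comm c x]
    have h5 : c * x ≤ c * x ^ 2 := mul_le_mul_of_nonneg_left (by nlinarith) hc.le
    linarith
  have final : 9 * 2 ^ d * (x ^ 2 * x ^ m) ≤ c * x ^ d := by
    have h6 : (0:ℝ) ≤ x ^ 2 * x ^ m := by positivity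
    calc 9 * 2 ^ d * (x ^ 2 * x ^ m) ≤ (c * x ^ 2) * (x ^ 2 * x ^ m) :=
        mul_le_mul_of_nonneg_right hcx h6
      _ = c * x ^ (m + 4) := by ring
      _ = c * x ^ d := by rw [hmd]
  have hxd : (0:ℝ) ≤ c * x ^ d := by positivity
  linarith

end Stmt9Aux

/-- Lemma 2.3 (5) of the paper: for even `d ≥ 6`, `g(x,y) = (x²-y²)²(x^{d-4}+y^{d-4})` is
`d`-homogeneous with `|G₁(g)| < ∞`, but `G₁(g)` contains the lines `y = ±x` and is
unbounded; moreover for every `t < 1` the polynomial `g - (1-t)x^d` takes negative values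
(for `x = y`) and has infinite sublevel-set volume, so `𝔽_d(ℝ²)` is not open. -/
theorem stmt_9 (d : ℕ) (hd6 : 6 ≤ d) (hd : Even d) :
    (g9 d).IsHomogeneous d ∧
    volume (G1 (g9 d)) < ⊤ ∧
    (∀ s : ℝ, (![s, s] : Fin 2 → ℝ) ∈ G1 (g9 d) ∧ (![s, -s] : Fin 2 → ℝ) ∈ G1 (g9 d)) ∧
    ¬ Bornology.IsBounded (G1 (g9 d)) ∧
    (∀ t : ℝ, t < 1 →
      (∃ s : ℝ, MvPolynomial.eval (![s, s] : Fin 2 → ℝ)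
        (g9 d - MvPolynomial.C (1 - t) * MvPolynomial.X 0 ^ d) < 0) ∧
      volume (G1 (g9 d - MvPolynomial.C (1 - t) * MvPolynomial.X 0 ^ d)) = ⊤) ∧
    ¬ (∀ g₁ : MvPolynomial (Fin 2) ℝ, g₁.IsHomogeneous d → volume (G1 g₁) < ⊤ →
        ∃ ε > (0 : ℝ), ∀ g₂ : MvPolynomial (Fin 2) ℝ, g₂.IsHomogeneous d →
          (∀ α, |g₂.coeff α - g₁.coeff α| < ε) → volume (G1 g₂) < ⊤) := by

  obtain ⟨m, hmd⟩ : ∃ m, m + 4 = d := ⟨d - 4, by omega⟩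
  have hdm : d - 4 = m := by omega
  have hm2 : 2 ≤ m := by omega
  have hme : Even m := by
    rcases hd with ⟨k, hk⟩
    exact ⟨k - 2, by omega⟩
  have he : MeasurePreserving (MeasurableEquiv.finTwoArrow : (Fin 2 → ℝ) ≃ᵐ ℝ × ℝ)
      volume volume := volume_preserving_finTwoArrow ℝ
  -- Part 1 : homogeneity
  have hhom : (g9 d).IsHomogeneous d := by
    have h1 : ((MvPolynomial.X 0 ^ 2 - MvPolynomial.X 1 ^ 2 : MvPolynomial (Fin 2) ℝ) ^ 2).IsHomogeneous 4 := by
      have h0 : ((MvPolynomial.X 0 ^ 2 - MvPolynomial.X 1 ^ 2 : MvPolynomial (Fin 2) ℝ)).IsHomogeneous 2 :=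
        (Stmt9Aux.isHom_X_pow 0 2).sub (Stmt9Aux.isHom_X_pow 1 2)
      have := h0.mul h0
      rw [← sq] at this
      exact this
    have h3 : ((MvPolynomial.X 0 ^ (d - 4) + MvPolynomial.X 1 ^ (d - 4) : MvPolynomial (Fin 2) ℝ)).IsHomogeneous (d - 4) :=
      (Stmt9Aux.isHom_X_pow 0 (d - 4)).add (Stmt9Aux.isHom_X_pow 1 (d - 4))
    have h4 := h1.mul h3
    rw [show 4 + (d - 4) = d by omega] at h4
    exact h4
  -- Part 2 : finite volume
  have hG1eq : G1 (g9 d) = (MeasurableEquiv.finTwoArrow : (Fin 2 → ℝ) ≃ᵐ ℝ × ℝ) ⁻¹'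
      {p : ℝ × ℝ | (p.1 ^ 2 - p.2 ^ 2) ^ 2 * (p.1 ^ m + p.2 ^ m) ≤ 1} := by
    ext x
    simp only [G1, mem_setOf_eq, mem_preimage, Stmt9Aux.finTwoArrow_apply']
    rw [Stmt9Aux.eval_g9, hdm]
  have hPmeas : MeasurableSet {p : ℝ × ℝ | (p.1 ^ 2 - p.2 ^ 2) ^ 2 * (p.1 ^ m + p.2 ^ m) ≤ 1} :=
    (isClosed_le (by fun_prop) continuous_const).measurableSet
  have part2 : volume (G1 (g9 d)) < ⊤ := by
    rw [hG1eq, he.measure_preimage hPmeas.nullMeasurableSet]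
    exact Stmt9Aux.volP hm2 hme
  -- Part 3 : lines
  have part3 : ∀ s : ℝ, (![s, s] : Fin 2 → ℝ) ∈ G1 (g9 d) ∧ (![s, -s] : Fin 2 → ℝ) ∈ G1 (g9 d) := by
    intro s
    constructor
    · show MvPolynomial.eval _ (g9 d) ≤ 1
      rw [Stmt9Aux.eval_g9]
      norm_num
    · show MvPolynomial.eval _ (g9 d) ≤ 1
      rw [Stmt9Aux.eval_g9]
      norm_num
  -- Part 4 : unbounded
  have part4 : ¬ Bornology.IsBounded (G1 (g9 d)) := by
    intro hb
    obtain ⟨C, hC⟩ := isBounded_iff_forall_norm_le.mp hb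
    have hmem := (part3 (|C| + 1)).1
    have h1 : ‖(![|C| + 1, |C| + 1] : Fin 2 → ℝ) 0‖ ≤ ‖(![|C| + 1, |C| + 1] : Fin 2 → ℝ)‖ :=
      norm_le_pi_norm _ 0
    have h2 := hC _ hmem
    simp only [Matrix.cons_val_zero, Real.norm_eq_abs] at h1
    rw [abs_of_pos (show (0:ℝ) < |C| + 1 by positivity)] at h1
    linarith [le_abs_self C, h1.trans h2]
  -- Part 5
  have part5 : ∀ t : ℝ, t < 1 →
      (∃ s : ℝ, MvPolynomial.eval (![s, s] : Fin 2 → ℝ)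
        (g9 d - MvPolynomial.C (1 - t) * MvPolynomial.X 0 ^ d) < 0) ∧
      volume (G1 (g9 d - MvPolynomial.C (1 - t) * MvPolynomial.X 0 ^ d)) = ⊤ := by
    intro t ht
    have hc : (0:ℝ) < 1 - t := by linarith
    constructor
    · refine ⟨1, ?_⟩
      have e1 : MvPolynomial.eval (![1, 1] : Fin 2 → ℝ) (g9 d) = 0 := by
        rw [Stmt9Aux.eval_g9]; norm_num
      have e2 : MvPolynomial.eval (![1, 1] : Fin 2 → ℝ)
          (MvPolynomial.C (1 - t) * MvPolynomial.X 0 ^ d : MvPolynomial (Fin 2) ℝ) = 1 - t := by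
        simp
      rw [map_sub, e1, e2]
      linarith
    · set M : ℝ := 1 + 9 * 2 ^ d / (1 - t) with hM
      set R : Set (ℝ × ℝ) := {p : ℝ × ℝ | M ≤ p.1 ∧ p.1 < p.2 ∧ p.2 < p.1 + 1} with hRdef
      have hRmeas : MeasurableSet R := by
        refine MeasurableSet.inter ?_ (MeasurableSet.inter ?_ ?_)
        · exact measurableSet_le measurable_const measurable_fst
        · exact measurableSet_lt measurable_fst measurable_snd
        · exact measurableSet_lt measurable_snd (measurable_fst.add_const 1)
      have hsub : (MeasurableEquiv.finTwoArrow : (Fin 2 → ℝ) ≃ᵐ ℝ × ℝ) ⁻¹' R ⊆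
          G1 (g9 d - MvPolynomial.C (1 - t) * MvPolynomial.X 0 ^ d) := by
        intro x hx
        rw [mem_preimage, Stmt9Aux.finTwoArrow_apply'] at hx
        obtain ⟨hx1, hx2, hx3⟩ := hx
        show MvPolynomial.eval x _ ≤ 1
        rw [map_sub, Stmt9Aux.eval_g9, hdm]
        have e2 : MvPolynomial.eval x
            (MvPolynomial.C (1 - t) * MvPolynomial.X 0 ^ d : MvPolynomial (Fin 2) ℝ)
            = (1 - t) * (x 0) ^ d := by simp
        rw [e2]
        have := Stmt9Aux.est hmd hc hx1 hx2 hx3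
        linarith
      refine eq_top_iff.mpr ?_
      calc (⊤ : ENNReal) = volume R := (Stmt9Aux.volR M).symm
        _ = volume ((MeasurableEquiv.finTwoArrow : (Fin 2 → ℝ) ≃ᵐ ℝ × ℝ) ⁻¹' R) :=
          (he.measure_preimage hRmeas.nullMeasurableSet).symm
        _ ≤ volume (G1 (g9 d - MvPolynomial.C (1 - t) * MvPolynomial.X 0 ^ d)) :=
          measure_mono hsub
  refine ⟨hhom, part2, part3, part4, part5, ?_⟩
  -- Part 6
  intro hopen
  obtain ⟨ε, hε, hcl⟩ := hopen (g9 d) hhom part2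
  set t : ℝ := 1 - ε / 2 with ht'
  have ht : t < 1 := by rw [ht']; linarith
  have hvol := (part5 t ht).2
  have h1t : 1 - t = ε / 2 := by rw [ht']; ring
  have hg2hom : (g9 d - MvPolynomial.C (1 - t) * MvPolynomial.X 0 ^ d).IsHomogeneous d := by
    apply hhom.sub
    have := (MvPolynomial.isHomogeneous_C (Fin 2) (1 - t : ℝ)).mul (Stmt9Aux.isHom_X_pow 0 d)
    simpa using this
  have hcoef : ∀ α, |(g9 d - MvPolynomial.C (1 - t) * MvPolynomial.X 0 ^ d).coeff α
      - (g9 d).coeff α| < ε := by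
    intro α
    have hdiff : (g9 d - MvPolynomial.C (1 - t) * MvPolynomial.X 0 ^ d).coeff α
        - (g9 d).coeff α
        = -((1 - t) * (MvPolynomial.X 0 ^ d : MvPolynomial (Fin 2) ℝ).coeff α) := by
      rw [MvPolynomial.coeff_sub, MvPolynomial.coeff_C_mul]
      ring
    rw [hdiff, abs_neg, MvPolynomial.coeff_X_pow, h1t]
    split_ifs
    · rw [mul_one, abs_of_pos (by positivity)]
      linarith
    · simpa using hε
  have hlt := hcl _ hg2hom hcoef
  rw [hvol] at hlt
  exact lt_irrefl _ hlt
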